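/- In any assignment of S′ (as in the construction adding variables x₁,…,x_{ℓ+1} to each clause) making exactly ℓ variables true in every clause, all of x₁,…,x_{ℓ+1} receive the same truth value, and that value is false. -/
import Mathlib


/-- In any assignment of `S'` (with fresh variables `x₁,…,x_{ℓ+1}` added to each
clause and the extra clause `{x₁,…,x_{ℓ+1},y₁,…,y_{k-ℓ}}`) making exactly `ℓ` variables true
in every clause, every `xᵢ` is assigned false (in particular all receive the same value). -/
theorem fresh_xs_false {V : Type*} [DecidableEq V] (k ℓ : ℕ)
    (hℓ : 1 ≤ ℓ) (hk : 2 * ℓ ≤ k)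
    (C : Finset (Finset V)) (hC : C.Nonempty) (hcard : ∀ c ∈ C, c.card = k)
    (τ : V ⊕ (Fin (ℓ + 1) ⊕ Fin (k - ℓ)) → Bool)
    (hsat : ∀ c ∈ C, ∀ i : Fin (ℓ + 1),
      ((insert (Sum.inr (Sum.inl i) : V ⊕ (Fin (ℓ + 1) ⊕ Fin (k - ℓ)))
          (c.image Sum.inl)).filter (fun v => τ v = true)).card = ℓ)
    (hspecial : ((Finset.univ.image (Sum.inr : (Fin (ℓ + 1) ⊕ Fin (k - ℓ)) →
        V ⊕ (Fin (ℓ + 1) ⊕ Fin (k - ℓ)))).filter (fun v => τ v = true)).card = ℓ) :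
    ∀ i : Fin (ℓ + 1), τ (Sum.inr (Sum.inl i)) = false := by
  intro i
  by_contra h
  have hi : τ (Sum.inr (Sum.inl i)) = true := by
    cases hτ : τ (Sum.inr (Sum.inl i)) with
    | false => exact absurd hτ h
    | true => rfl
  obtain ⟨c, hc⟩ := hC
  have hnm : ∀ j : Fin (ℓ + 1),
      (Sum.inr (Sum.inl j) : V ⊕ (Fin (ℓ + 1) ⊕ Fin (k - ℓ))) ∉
        (c.image Sum.inl).filter (fun v => τ v = true) := by
    intro j hmem
    simp [Finset.mem_filter] at hmem
  have h1 := hsat c hc i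
  rw [Finset.filter_insert, if_pos hi,
    Finset.card_insert_of_notMem (hnm i)] at h1
  have key : ∀ j : Fin (ℓ + 1), τ (Sum.inr (Sum.inl j)) = true := by
    intro j
    have h2 := hsat c hc j
    rw [Finset.filter_insert] at h2
    by_cases hj : τ (Sum.inr (Sum.inl j)) = true
    · exact hj
    · rw [if_neg hj] at h2
      omega
  -- the special clause now has at least ℓ+1 true variables
  have hsub : (Finset.univ.image
      (fun j : Fin (ℓ + 1) => (Sum.inr (Sum.inl j) : V ⊕ (Fin (ℓ + 1) ⊕ Fin (k - ℓ))))) ⊆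
      ((Finset.univ.image (Sum.inr : (Fin (ℓ + 1) ⊕ Fin (k - ℓ)) →
        V ⊕ (Fin (ℓ + 1) ⊕ Fin (k - ℓ)))).filter (fun v => τ v = true)) := by
    intro v hv
    simp only [Finset.mem_image, Finset.mem_univ, true_and] at hv
    obtain ⟨j, rfl⟩ := hv
    simp only [Finset.mem_filter, Finset.mem_image, Finset.mem_univ, true_and]
    exact ⟨⟨Sum.inl j, rfl⟩, key j⟩
  have hcard2 : (Finset.univ.image
      (fun j : Fin (ℓ + 1) => (Sum.inr (Sum.inl j) : V ⊕ (Fin (ℓ + 1) ⊕ Fin (k - ℓ))))).card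
      = ℓ + 1 := by
    rw [Finset.card_image_of_injective _ (fun a b hab => by
      simpa using hab)]
    simp
  have := Finset.card_le_card hsub
  omega
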